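/- (Pretty-good estimate) For any POVM {P_x}_{x∈X} on a d-dimensional Hilbert space, the degree of uniform autocorrelation κ_u(P:P) = (1/d)∑_x Tr(P_x²) and the degree of autotuning κ_u*(P‖P) satisfy κ_u*(P‖P) ≥ κ_u(P:P) ≥ 2κ_u*(P‖P) − 1. -/

import Mathlib

open Matrix Finset
open scoped ComplexOrder

def IsPOVM {X : Type*} [Fintype X] {n : ℕ} (P : X → Matrix (Fin n) (Fin n) ℂ) : Prop :=
  (∀ x, (P x).PosSemidef) ∧ ∑ x, P x = 1

def IsCPMap {a b : ℕ} (Φ : Matrix (Fin a) (Fin a) ℂ →ₗ[ℂ] Matrix (Fin b) (Fin b) ℂ) : Prop :=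
  ∃ (k : ℕ) (K : Fin k → Matrix (Fin b) (Fin a) ℂ), ∀ M, Φ M = ∑ i, K i * M * (K i)ᴴ

/-- `Sharper P Q` : there is a fuzzifying operation (CP unital preprocessing mixed
with a trivial POVM) transforming the POVM `P` into the POVM `Q`. -/
def Sharper {X : Type*} [Fintype X] {a b : ℕ}
    (P : X → Matrix (Fin a) (Fin a) ℂ) (Q : X → Matrix (Fin b) (Fin b) ℂ) : Prop :=
  ∃ (E : Matrix (Fin a) (Fin a) ℂ →ₗ[ℂ] Matrix (Fin b) (Fin b) ℂ) (μ : ℝ) (p : X → ℝ),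
    IsCPMap E ∧ E 1 = 1 ∧ 0 ≤ μ ∧ μ ≤ 1 ∧ (∀ x, 0 ≤ p x) ∧ ∑ x, p x = 1 ∧
    ∀ x, Q x = (μ : ℂ) • E (P x) + ((1 - μ : ℝ) : ℂ) • ((p x : ℂ) • 1)
noncomputable def tuningSet {X : Type*} [Fintype X] {a r : ℕ}
    (P : X → Matrix (Fin a) (Fin a) ℂ) (Z : X → Matrix (Fin r) (Fin r) ℂ) : Set ℝ :=
  {v | ∃ Q : X → Matrix (Fin r) (Fin r) ℂ, Sharper P Q ∧
        v = (1 / (r : ℝ)) * ∑ x, (Q x * Z x).trace.re}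

/-- The tuning degree κ_u*(P‖Z): the supremum of the uniform correlation with the
reference Z achievable from P via fuzzifying operations. -/
noncomputable def tuningDegree {X : Type*} [Fintype X] {a r : ℕ}
    (P : X → Matrix (Fin a) (Fin a) ℂ) (Z : X → Matrix (Fin r) (Fin r) ℂ) : ℝ :=
  sSup (tuningSet P Z)

section Aux

lemma psd_trace_re_nonneg {n : ℕ} {M : Matrix (Fin n) (Fin n) ℂ} (hM : M.PosSemidef) :
    0 ≤ M.trace.re := by
  have h : ∀ i : Fin n, 0 ≤ (M i i).re := by
    intro i
    have h1 := hM.dotProduct_mulVec_nonneg (Pi.single i 1)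
    have h2 : (star (Pi.single i 1) ⬝ᵥ M.mulVec (Pi.single i 1)) = M i i := by
      simp [dotProduct, Matrix.mulVec, Pi.single_apply, Finset.sum_ite_eq',
        mul_comm]
    rw [h2] at h1
    exact (RCLike.nonneg_iff.mp h1).1
  calc (0:ℝ) ≤ ∑ i, (M i i).re := Finset.sum_nonneg fun i _ => h i
    _ = M.trace.re := by rw [Matrix.trace, Complex.re_sum]; rfl

open scoped MatrixOrder in
lemma psd_trace_mul_re_nonneg {n : ℕ} {A B : Matrix (Fin n) (Fin n) ℂ}
    (hA : A.PosSemidef) (hB : B.PosSemidef) : 0 ≤ (A * B).trace.re := by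
  have hS : (CFC.sqrt B).PosSemidef := (CFC.sqrt_nonneg B).posSemidef
  have key : (A * B).trace = (CFC.sqrt B * A * (CFC.sqrt B)ᴴ).trace := by
    rw [hS.1]
    conv_lhs => rw [← CFC.sqrt_mul_sqrt_self B hB.nonneg]
    rw [← mul_assoc, Matrix.trace_mul_cycle]
  rw [key]
  exact psd_trace_re_nonneg (hA.mul_mul_conjTranspose_same (CFC.sqrt B))

lemma psd_sum {n : ℕ} {ι : Type*} (s : Finset ι) (f : ι → Matrix (Fin n) (Fin n) ℂ)
    (h : ∀ i ∈ s, (f i).PosSemidef) : (∑ i ∈ s, f i).PosSemidef :=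
  Finset.sum_induction f _ (fun _ _ ha hb => ha.add hb) Matrix.PosSemidef.zero h

lemma psd_smul {n : ℕ} {M : Matrix (Fin n) (Fin n) ℂ} (hM : M.PosSemidef)
    {c : ℝ} (hc : 0 ≤ c) : ((c : ℂ) • M).PosSemidef := by
  refine PosSemidef.of_dotProduct_mulVec_nonneg ?_ ?_
  · unfold Matrix.IsHermitian
    rw [conjTranspose_smul, hM.1.eq]
    norm_num
  · intro x
    have : star x ⬝ᵥ ((c : ℂ) • M) *ᵥ x = (c : ℂ) * (star x ⬝ᵥ M *ᵥ x) := by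
      rw [Matrix.smul_mulVec, dotProduct_smul, smul_eq_mul]
    rw [this]
    exact mul_nonneg (by exact_mod_cast hc) (hM.dotProduct_mulVec_nonneg x)

lemma sharper_isPOVM {X : Type*} [Fintype X] {a b : ℕ}
    {P : X → Matrix (Fin a) (Fin a) ℂ} {Q : X → Matrix (Fin b) (Fin b) ℂ}
    (hP : IsPOVM P) (h : Sharper P Q) : IsPOVM Q := by
  obtain ⟨E, μ, p, ⟨k, K, hK⟩, hE1, hμ0, hμ1, hp0, hp1, hQ⟩ := h
  constructor
  · intro x
    rw [hQ x]
    refine Matrix.PosSemidef.add ?_ ?_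
    · refine psd_smul ?_ hμ0
      rw [hK]
      exact psd_sum _ _ fun i _ => (hP.1 x).mul_mul_conjTranspose_same (K i)
    · refine psd_smul ?_ (by linarith)
      exact psd_smul Matrix.PosSemidef.one (hp0 x)
  · rw [Finset.sum_congr rfl fun x _ => hQ x, Finset.sum_add_distrib, ← Finset.smul_sum,
      ← map_sum, hP.2, hE1, ← Finset.smul_sum, ← Finset.sum_smul]
    have hps : ∑ x, ((p x : ℂ)) = 1 := by exact_mod_cast hp1
    rw [hps, one_smul]
    push_cast
    module

/-- Key bound: for POVMs Q and P on the same space,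
`2 ∑ Re Tr(Q x * P x) ≤ d + ∑ Re Tr(P x * P x)`. -/
lemma povm_pgm_bound {X : Type*} [Fintype X] {d : ℕ}
    {P Q : X → Matrix (Fin d) (Fin d) ℂ} (hP : IsPOVM P) (hQ : IsPOVM Q) :
    2 * ∑ x, (Q x * P x).trace.re ≤ (d : ℝ) + ∑ x, (P x * P x).trace.re := by
  classical
  have hPle : ∀ x, ((1 : Matrix (Fin d) (Fin d) ℂ) - Q x).PosSemidef := by
    intro x
    have : (1 : Matrix (Fin d) (Fin d) ℂ) - Q x = ∑ y ∈ Finset.univ.erase x, Q y := by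
      rw [← hQ.2, Finset.sum_erase_eq_sub (Finset.mem_univ x)]
    rw [this]
    exact psd_sum _ _ fun y _ => hQ.1 y
  have hPP : ∀ x, (P x * P x).PosSemidef := by
    intro x
    have := Matrix.posSemidef_conjTranspose_mul_self (P x)
    rwa [(hP.1 x).1.eq] at this
  have h1 : ∀ x, (Q x * P x * P x).trace.re ≤ (P x * P x).trace.re := by
    intro x
    have h := psd_trace_mul_re_nonneg (hPle x) (hPP x)
    have he : ((1 - Q x) * (P x * P x)).trace = (P x * P x).trace - (Q x * P x * P x).trace := by
      rw [sub_mul, one_mul, Matrix.trace_sub, mul_assoc]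
    rw [he] at h
    have := Complex.sub_re (P x * P x).trace (Q x * P x * P x).trace
    linarith [h, this.symm ▸ h]
  have h2 : ∀ x, 2 * (Q x * P x).trace.re ≤ (Q x).trace.re + (Q x * P x * P x).trace.re := by
    intro x
    have hsq : ((1 - P x) * (1 - P x)).PosSemidef := by
      have := Matrix.posSemidef_conjTranspose_mul_self ((1 : Matrix (Fin d) (Fin d) ℂ) - P x)
      have hh : ((1 : Matrix (Fin d) (Fin d) ℂ) - P x)ᴴ = 1 - P x := by
        rw [conjTranspose_sub, conjTranspose_one, (hP.1 x).1.eq]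
      rwa [hh] at this
    have h := psd_trace_mul_re_nonneg (hQ.1 x) hsq
    have he : (Q x * ((1 - P x) * (1 - P x))).trace
        = (Q x).trace - (Q x * P x).trace - (Q x * P x).trace + (Q x * P x * P x).trace := by
      have : Q x * ((1 - P x) * (1 - P x))
          = Q x - Q x * P x - Q x * P x + Q x * P x * P x := by
        noncomm_ring
      rw [this, Matrix.trace_add, Matrix.trace_sub, Matrix.trace_sub]
    rw [he] at h
    simp only [Complex.add_re, Complex.sub_re] at h
    linarith
  have hQtr : ∑ x, (Q x).trace.re = (d : ℝ) := by
    have : ∑ x, (Q x).trace = (d : ℂ) := by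
      rw [← Matrix.trace_sum, hQ.2, Matrix.trace_one]
      simp
    calc ∑ x, (Q x).trace.re = (∑ x, (Q x).trace).re := by rw [Complex.re_sum]
      _ = (d : ℝ) := by rw [this]; simp
  calc 2 * ∑ x, (Q x * P x).trace.re = ∑ x, 2 * (Q x * P x).trace.re := by
        rw [Finset.mul_sum]
    _ ≤ ∑ x, ((Q x).trace.re + (Q x * P x * P x).trace.re) :=
        Finset.sum_le_sum fun x _ => h2 x
    _ ≤ ∑ x, ((Q x).trace.re + (P x * P x).trace.re) :=
        Finset.sum_le_sum fun x _ => by linarith [h1 x]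
    _ = (d : ℝ) + ∑ x, (P x * P x).trace.re := by
        rw [Finset.sum_add_distrib, hQtr]

end Aux

/-- Pretty-good estimate: the uniform autocorrelation κ_u(P:P) sandwiches the
degree of autotuning κ_u*(P‖P): κ_u*(P‖P) ≥ κ_u(P:P) ≥ 2 κ_u*(P‖P) − 1. -/
theorem pretty_good_autotuning {X : Type*} [Fintype X] [Nonempty X] {d : ℕ}
    (hd : 0 < d) (P : X → Matrix (Fin d) (Fin d) ℂ) (hP : IsPOVM P) :
    (1 / (d : ℝ)) * ∑ x, (P x * P x).trace.re ≤ tuningDegree P P ∧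
    2 * tuningDegree P P - 1 ≤ (1 / (d : ℝ)) * ∑ x, (P x * P x).trace.re := by
  set κ : ℝ := (1 / (d : ℝ)) * ∑ x, (P x * P x).trace.re with hκ
  have hdpos : (0:ℝ) < d := by exact_mod_cast hd
  -- every element of the tuning set satisfies 2 v - 1 ≤ κ
  have hbound : ∀ v ∈ tuningSet P P, 2 * v - 1 ≤ κ := by
    rintro v ⟨Q, hQs, rfl⟩
    have hQ : IsPOVM Q := sharper_isPOVM hP hQs
    have key := povm_pgm_bound hP hQ
    rw [hκ]
    have h1d : (0:ℝ) ≤ 1 / d := by positivity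
    linarith [mul_le_mul_of_nonneg_left key h1d, one_div_mul_cancel (ne_of_gt hdpos)]
  -- κ belongs to the tuning set (identity fuzzifying operation)
  have hmem : κ ∈ tuningSet P P := by
    refine ⟨P, ⟨LinearMap.id, 1, fun _ => 1 / (Fintype.card X : ℝ), ?_, rfl, zero_le_one,
      le_refl 1, fun x => by positivity, ?_, ?_⟩, rfl⟩
    · exact ⟨1, fun _ => 1, fun M => by simp⟩
    · rw [Finset.sum_const, Finset.card_univ, nsmul_eq_mul]
      have : (0:ℝ) < Fintype.card X := by exact_mod_cast Fintype.card_pos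
      field_simp
    · intro x
      simp
  have hbdd : BddAbove (tuningSet P P) := by
    refine ⟨(1 + κ) / 2, fun v hv => ?_⟩
    have := hbound v hv
    linarith
  constructor
  · exact le_csSup hbdd hmem
  · have hle : tuningDegree P P ≤ (1 + κ) / 2 := by
      apply csSup_le ⟨κ, hmem⟩
      intro v hv
      have := hbound v hv
      linarith
    unfold tuningDegree at hle ⊢
    linarith
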